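/- arXiv:2006.12979 — 2 statements merged into one kernel-verified Lean document; each statement's English description precedes it below -/
import Mathlib

section
/- Let A be a diagonal n×n matrix with diagonal entries λ_1,…,λ_n. Then the partial derivative of ℳ_p (viewed as a function of the entries of a symmetric matrix via eigenvalue sums, equivalently of det 𝒟_A) with respect to an off-diagonal entry a_{kl} (k≠l) vanishes at A, and with respect to a diagonal entry a_{ll} equals ℳ_p(λ) · Σ_{l ∈ {k_1,…,k_p}} 1/(λ_{k_1}+⋯+λ_{k_p}), where the sum runs over all increasing p-tuples containing l, provided all p-fold eigenvalue sums are nonzero. -/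
open ExteriorAlgebra Finset

/-- The wedge `v₁ ∧ ⋯ ∧ v_p` as an element of the `p`-th exterior power. -/
noncomputable def wedge {M : Type*} [AddCommGroup M] [Module ℝ M] (p : ℕ)
    (v : Fin p → M) : ⋀[ℝ]^p M :=
  ⟨ιMulti ℝ p v, ιMulti_range ℝ p (Set.mem_range_self v)⟩

namespace MpAux

variable {n p : ℕ}

abbrev S (n p : ℕ) := {s : Finset (Fin n) // s.card = p}

noncomputable def sOrd (s : S n p) : Fin p → Fin n :=
  fun i => (s.1.orderIsoOfFin s.2 i : Fin n)

lemma sOrd_mem (s : S n p) (i : Fin p) : sOrd s i ∈ s.1 :=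
  (s.1.orderIsoOfFin s.2 i).2

lemma sOrd_injective (s : S n p) : Function.Injective (sOrd s) := by
  intro a b h
  exact (s.1.orderIsoOfFin s.2).injective (Subtype.ext h)

noncomputable def bvec (s : S n p) : Fin p → (Fin n → ℝ) :=
  fun i => Pi.single (sOrd s i) 1

noncomputable def bw (s : S n p) : ⋀[ℝ]^p (Fin n → ℝ) := wedge p (bvec s)

noncomputable def phiAlt (s : S n p) : (Fin n → ℝ) [⋀^Fin p]→ₗ[ℝ] ℝ :=
  (Matrix.detRowAlternating).compLinearMap (LinearMap.funLeft ℝ ℝ (sOrd s))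

lemma phiAlt_apply (s : S n p) (v : Fin p → (Fin n → ℝ)) :
    phiAlt s v = Matrix.det (Matrix.of fun i j => v i (sOrd s j)) := rfl

lemma exists_mem_not_mem {s t : S n p} (h : s ≠ t) : ∃ x ∈ t.1, x ∉ s.1 := by
  have : ¬ t.1 ⊆ s.1 := by
    intro hsub
    exact h (Subtype.ext (Finset.eq_of_subset_of_card_le hsub (by rw [s.2, t.2])).symm)
  exact Finset.not_subset.mp this

lemma phiAlt_bvec (s t : S n p) : phiAlt s (bvec t) = if s = t then 1 else 0 := by
  rw [phiAlt_apply]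
  split_ifs with hst
  · subst hst
    have : (Matrix.of fun i j => bvec s i (sOrd s j)) = (1 : Matrix (Fin p) (Fin p) ℝ) := by
      ext i j
      simp only [Matrix.of_apply, bvec, Pi.single_apply, Matrix.one_apply]
      by_cases h : i = j
      · subst h; simp
      · rw [if_neg (fun hh : sOrd s j = sOrd s i => h ((sOrd_injective s hh).symm)),
          if_neg h]
    rw [this, Matrix.det_one]
  · obtain ⟨x, hxt, hxs⟩ := exists_mem_not_mem hst
    obtain ⟨i0, hi0⟩ : ∃ i0, sOrd t i0 = x := by
      refine ⟨(t.1.orderIsoOfFin t.2).symm ⟨x, hxt⟩, ?_⟩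
      simp [sOrd]
    apply Matrix.det_eq_zero_of_row_eq_zero i0
    intro j
    simp only [Matrix.of_apply, bvec, Pi.single_apply, hi0]
    rw [if_neg]
    intro hh
    exact hxs (hh ▸ sOrd_mem s j)

noncomputable def Ffun (s : S n p) : (⋀[ℝ]^p (Fin n → ℝ)) →ₗ[ℝ] ℝ :=
  (liftAlternating (Pi.single p (phiAlt s))).comp (Submodule.subtype _)

lemma Ffun_wedge (s : S n p) (v : Fin p → (Fin n → ℝ)) :
    Ffun s (wedge p v) = phiAlt s v := by
  simp only [Ffun, LinearMap.comp_apply, Submodule.subtype_apply, wedge,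
    liftAlternating_apply_ιMulti, Pi.single_eq_same]


lemma wedge_coe (v : Fin p → (Fin n → ℝ)) :
    (wedge p v : ExteriorAlgebra ℝ (Fin n → ℝ)) = ιMulti ℝ p v := rfl

lemma wedge_update_add (v : Fin p → (Fin n → ℝ)) (i : Fin p) (x y : Fin n → ℝ) :
    wedge p (Function.update v i (x + y)) =
      wedge p (Function.update v i x) + wedge p (Function.update v i y) := by
  apply Subtype.ext
  exact (ιMulti ℝ p).toMultilinearMap.map_update_add v i x y

lemma wedge_update_smul (v : Fin p → (Fin n → ℝ)) (i : Fin p) (c : ℝ) (x : Fin n → ℝ) :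
    wedge p (Function.update v i (c • x)) = c • wedge p (Function.update v i x) := by
  apply Subtype.ext
  exact (ιMulti ℝ p).toMultilinearMap.map_update_smul v i c x

lemma wedge_span :
    Submodule.span ℝ (Set.range (wedge p : (Fin p → (Fin n → ℝ)) → _)) = ⊤ := by
  rw [Submodule.eq_top_iff']
  rintro ⟨y, hy⟩
  have hy' : y ∈ Submodule.span ℝ (Set.range (ιMulti ℝ p (M := Fin n → ℝ))) := by
    rwa [ιMulti_span_fixedDegree]
  have key : ∀ z ∈ Submodule.span ℝ (Set.range (ιMulti ℝ p (M := Fin n → ℝ))),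
      ∃ h : z ∈ ⋀[ℝ]^p (Fin n → ℝ),
        (⟨z, h⟩ : ⋀[ℝ]^p (Fin n → ℝ)) ∈
          Submodule.span ℝ (Set.range (wedge p : (Fin p → (Fin n → ℝ)) → _)) := by
    intro z hz
    induction hz using Submodule.span_induction with
    | mem z hz =>
      obtain ⟨v, rfl⟩ := hz
      exact ⟨ιMulti_range ℝ p (Set.mem_range_self v),
        Submodule.subset_span (Set.mem_range_self v)⟩
    | zero => exact ⟨Submodule.zero_mem _, Submodule.zero_mem _⟩
    | add a b ha hb iha ihb =>
      obtain ⟨h1, m1⟩ := iha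
      obtain ⟨h2, m2⟩ := ihb
      exact ⟨Submodule.add_mem _ h1 h2, Submodule.add_mem _ m1 m2⟩
    | smul c a ha iha =>
      obtain ⟨h1, m1⟩ := iha
      exact ⟨Submodule.smul_mem _ c h1, Submodule.smul_mem _ c m1⟩
  obtain ⟨h, hm⟩ := key y hy'
  exact hm


lemma iMulti_expand (v : Fin p → (Fin n → ℝ)) :
    ιMulti ℝ p v = ∑ s : S n p, phiAlt s v • ιMulti ℝ p (bvec s) := by
  classical
  set R : MultilinearMap ℝ (fun _ : Fin p => (Fin n → ℝ)) (ExteriorAlgebra ℝ (Fin n → ℝ)) :=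
    ∑ s : S n p, ((LinearMap.toSpanSingleton ℝ _ (ιMulti ℝ p (bvec s))).compAlternatingMap
      (phiAlt s)).toMultilinearMap with hR
  have hRapp : ∀ w, R w = ∑ s : S n p, phiAlt s w • ιMulti ℝ p (bvec s) := by
    intro w
    rw [hR, MultilinearMap.sum_apply]
    simp [LinearMap.toSpanSingleton_apply]
  have main : (ιMulti ℝ p (M := Fin n → ℝ)).toMultilinearMap = R := by
    apply Module.Basis.ext_multilinear (fun _ => Pi.basisFun ℝ (Fin n))
    intro g
    have hbv : (fun i => Pi.basisFun ℝ (Fin n) (g i)) = fun i => Pi.single (g i) (1 : ℝ) := by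
      funext i; simp
    rw [hbv]
    show ιMulti ℝ p (fun i => Pi.single (g i) (1:ℝ)) = R (fun i => Pi.single (g i) (1:ℝ))
    rw [hRapp]
    by_cases hg : Function.Injective g
    · -- injective case
      have hcard : (Finset.image g Finset.univ).card = p := by
        rw [Finset.card_image_of_injective _ hg, Finset.card_univ, Fintype.card_fin]
      set s0 : S n p := ⟨Finset.image g Finset.univ, hcard⟩ with hs0
      have hmem : ∀ i, g i ∈ s0.1 := fun i =>
        Finset.mem_image.mpr ⟨i, Finset.mem_univ i, rfl⟩
      set σ' : Fin p → Fin p :=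
        fun i => (s0.1.orderIsoOfFin s0.2).symm ⟨g i, hmem i⟩ with hσ'
      have hσeq : ∀ i, sOrd s0 (σ' i) = g i := by
        intro i
        simp only [hσ', sOrd, OrderIso.apply_symm_apply]
      have hσinj : Function.Injective σ' := by
        intro a b hab
        apply hg
        rw [← hσeq a, ← hσeq b, hab]
      let σ : Equiv.Perm (Fin p) :=
        Equiv.ofBijective σ' (Finite.injective_iff_bijective.mp hσinj)
      have hcomp : (fun i => Pi.single (g i) (1:ℝ)) = bvec s0 ∘ σ := by
        funext i
        simp only [Function.comp_apply, bvec]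
        rw [show σ i = σ' i from rfl, hσeq]
      rw [hcomp, AlternatingMap.map_perm (ιMulti ℝ p) (bvec s0) σ]
      have hε : ∀ s : S n p, phiAlt s (bvec s0 ∘ σ)
          = ((Equiv.Perm.sign σ : ℤ) : ℝ) * (if s = s0 then 1 else 0) := by
        intro s
        rw [AlternatingMap.map_perm (phiAlt s) (bvec s0) σ, phiAlt_bvec, Units.smul_def,
          zsmul_eq_mul]
      have hterm : ∀ s : S n p, phiAlt s (bvec s0 ∘ σ) • ιMulti ℝ p (bvec s)
          = (if s = s0 then ((Equiv.Perm.sign σ : ℤ) : ℝ) • ιMulti ℝ p (bvec s0) else 0) := by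
        intro s
        rw [hε s]
        split_ifs with h
        · subst h; rw [mul_one]
        · rw [mul_zero, zero_smul]
      rw [Finset.sum_congr rfl (fun s _ => hterm s), Finset.sum_ite_eq'
        (Finset.univ : Finset (S n p)) s0
        (fun _ => ((Equiv.Perm.sign σ : ℤ) : ℝ) • ιMulti ℝ p (bvec s0)),
        if_pos (Finset.mem_univ s0), Units.smul_def, ← Int.cast_smul_eq_zsmul ℝ]
    · -- non-injective case
      obtain ⟨a, b, hab, hne⟩ : ∃ a b, g a = g b ∧ a ≠ b := by
        simp only [Function.Injective, not_forall] at hg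
        obtain ⟨a, b, h1, h2⟩ := hg
        exact ⟨a, b, h1, h2⟩
      rw [AlternatingMap.map_eq_zero_of_eq (ιMulti ℝ p) _ (i := a) (j := b) (by rw [hab]) hne]
      symm
      apply Finset.sum_eq_zero
      intro s _
      rw [AlternatingMap.map_eq_zero_of_eq (phiAlt s) _ (i := a) (j := b) (by rw [hab]) hne,
        zero_smul]
  have h2 := DFunLike.congr_fun main v
  rw [← hRapp v]
  exact h2


lemma wedge_expand (v : Fin p → (Fin n → ℝ)) :
    wedge p v = ∑ s : S n p, phiAlt s v • wedge p (bvec s) := by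
  apply Subtype.ext
  rw [wedge_coe]
  push_cast [AddSubmonoidClass.coe_finset_sum]
  rw [iMulti_expand]
  rfl

noncomputable def toCoords : (⋀[ℝ]^p (Fin n → ℝ)) →ₗ[ℝ] (S n p → ℝ) := LinearMap.pi Ffun

noncomputable def ofCoords : (S n p → ℝ) →ₗ[ℝ] ⋀[ℝ]^p (Fin n → ℝ) :=
  ∑ s : S n p, LinearMap.smulRight (LinearMap.proj s) (bw s)

lemma ofCoords_apply (c : S n p → ℝ) : ofCoords c = ∑ s : S n p, c s • bw s := by
  simp [ofCoords, LinearMap.sum_apply]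

lemma toCoords_wedge (v : Fin p → (Fin n → ℝ)) (s : S n p) :
    toCoords (wedge p v) s = phiAlt s v := by
  simp [toCoords, Ffun_wedge]

lemma toCoords_ofCoords (c : S n p → ℝ) : toCoords (ofCoords c) = c := by
  funext t
  rw [ofCoords_apply]
  simp only [toCoords, LinearMap.pi_apply, map_sum, map_smul]
  have : ∀ s : S n p, c s • Ffun t (bw s) = if t = s then c s else 0 := by
    intro s
    rw [bw, Ffun_wedge, phiAlt_bvec]
    split_ifs with h
    · rw [smul_eq_mul, mul_one]
    · rw [smul_eq_mul, mul_zero]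
  rw [Finset.sum_congr rfl fun s _ => this s, Finset.sum_ite_eq Finset.univ t c,
    if_pos (Finset.mem_univ t)]

lemma ofCoords_toCoords (x : ⋀[ℝ]^p (Fin n → ℝ)) : ofCoords (toCoords x) = x := by
  have : (ofCoords.comp toCoords : (⋀[ℝ]^p (Fin n → ℝ)) →ₗ[ℝ] ⋀[ℝ]^p (Fin n → ℝ))
      = LinearMap.id := by
    apply LinearMap.ext_on (wedge_span (n := n) (p := p))
    rintro x ⟨v, rfl⟩
    rw [LinearMap.comp_apply, LinearMap.id_apply, ofCoords_apply]
    rw [Finset.sum_congr rfl fun s _ => by rw [toCoords_wedge]]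
    exact (wedge_expand v).symm
  exact DFunLike.congr_fun this x

noncomputable def coordEquiv : (⋀[ℝ]^p (Fin n → ℝ)) ≃ₗ[ℝ] (S n p → ℝ) :=
  { toCoords with
    invFun := ofCoords
    left_inv := ofCoords_toCoords
    right_inv := fun c => toCoords_ofCoords c }

noncomputable def wBasis : Module.Basis (S n p) ℝ (⋀[ℝ]^p (Fin n → ℝ)) :=
  Module.Basis.ofEquivFun coordEquiv

lemma wBasis_apply (t : S n p) : wBasis (n := n) (p := p) t = bw t := by
  classical
  rw [wBasis, Module.Basis.coe_ofEquivFun]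
  show ofCoords (Pi.single t 1) = bw t
  rw [ofCoords_apply]
  have : ∀ s : S n p, ((Pi.single t 1 : S n p → ℝ)) s • bw s = if s = t then bw t else 0 := by
    intro s
    by_cases h : s = t
    · subst h; rw [Pi.single_eq_same, one_smul, if_pos rfl]
    · rw [Pi.single_eq_of_ne h, zero_smul, if_neg h]
  rw [Finset.sum_congr rfl fun s _ => this s, Finset.sum_ite_eq' Finset.univ t,
    if_pos (Finset.mem_univ t)]

lemma wBasis_repr (x : ⋀[ℝ]^p (Fin n → ℝ)) (s : S n p) :
    (wBasis.repr x) s = Ffun s x := by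
  rw [wBasis, Module.Basis.ofEquivFun_repr_apply]
  rfl

lemma toMatrix_entry (f : (⋀[ℝ]^p (Fin n → ℝ)) →ₗ[ℝ] ⋀[ℝ]^p (Fin n → ℝ)) (s t : S n p) :
    LinearMap.toMatrix wBasis wBasis f s t = Ffun s (f (bw t)) := by
  rw [LinearMap.toMatrix_apply, wBasis_apply, wBasis_repr]


section Dlin

variable (D : Matrix (Fin n) (Fin n) ℝ → (⋀[ℝ]^p (Fin n → ℝ) →ₗ[ℝ] ⋀[ℝ]^p (Fin n → ℝ)))
variable (hD : ∀ (B : Matrix (Fin n) (Fin n) ℝ) (v : Fin p → (Fin n → ℝ)),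
      D B (wedge p v) = ∑ i : Fin p, wedge p (Function.update v i (B.mulVec (v i))))

include hD

lemma D_add (B C : Matrix (Fin n) (Fin n) ℝ) : D (B + C) = D B + D C := by
  apply LinearMap.ext_on (wedge_span (n := n) (p := p))
  rintro x ⟨v, rfl⟩
  rw [LinearMap.add_apply, hD, hD, hD, ← Finset.sum_add_distrib]
  apply Finset.sum_congr rfl
  intro i _
  rw [Matrix.add_mulVec, wedge_update_add]

lemma D_smul (c : ℝ) (B : Matrix (Fin n) (Fin n) ℝ) : D (c • B) = c • D B := by
  apply LinearMap.ext_on (wedge_span (n := n) (p := p))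
  rintro x ⟨v, rfl⟩
  rw [LinearMap.smul_apply, hD, hD, Finset.smul_sum]
  apply Finset.sum_congr rfl
  intro i _
  rw [Matrix.smul_mulVec, wedge_update_smul]

lemma D_diagonal (μ : Fin n → ℝ) (s : S n p) :
    D (Matrix.diagonal μ) (bw s) = (∑ j ∈ s.1, μ j) • bw s := by
  rw [bw, hD]
  have h1 : ∀ i, (Matrix.diagonal μ).mulVec (bvec s i) = μ (sOrd s i) • bvec s i := by
    intro i
    funext x
    rw [Matrix.mulVec_diagonal]
    simp only [bvec, Pi.smul_apply, smul_eq_mul, Pi.single_apply]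
    by_cases h : x = sOrd s i
    · subst h; simp
    · simp [h]
  have h2 : ∀ i : Fin p, wedge p (Function.update (bvec s) i
      ((Matrix.diagonal μ).mulVec (bvec s i))) = μ (sOrd s i) • wedge p (bvec s) := by
    intro i
    rw [h1 i, wedge_update_smul, Function.update_eq_self]
  rw [Finset.sum_congr rfl fun i _ => h2 i, ← Finset.sum_smul]
  congr 1
  rw [← Finset.sum_coe_sort s.1 μ, ← Equiv.sum_comp (s.1.orderIsoOfFin s.2).toEquiv
    (fun x => μ (x : Fin n))]
  rfl

lemma toMatrix_D_diagonal (μ : Fin n → ℝ) :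
    LinearMap.toMatrix wBasis wBasis (D (Matrix.diagonal μ))
      = Matrix.diagonal (fun s : S n p => ∑ j ∈ s.1, μ j) := by
  ext s t
  rw [toMatrix_entry, D_diagonal D hD, map_smul, bw, Ffun_wedge, phiAlt_bvec]
  by_cases h : s = t
  · subst h; simp [Matrix.diagonal_apply_eq]
  · rw [Matrix.diagonal_apply_ne _ h, if_neg h, smul_eq_mul, mul_zero]


omit hD in
lemma mulVec_std (k l : Fin n) (j : Fin n) :
    (Matrix.single k l (1:ℝ)).mulVec (Pi.single j 1)
      = if j = l then Pi.single k 1 else 0 := by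
  rw [show (Matrix.single k l (1:ℝ)).mulVec (Pi.single j 1) = fun i => Matrix.single k l (1:ℝ) i j * 1 from
    funext fun _ => dotProduct_single _ _ _]
  funext x
  simp only [Matrix.single, Matrix.of_apply, mul_one]
  by_cases hj : j = l
  · rw [if_pos hj]
    by_cases hx : k = x
    · subst hx
      rw [if_pos ⟨rfl, hj.symm⟩, Pi.single_eq_same]
    · rw [if_neg (fun h => hx h.1), Pi.single_eq_of_ne (Ne.symm hx)]
  · rw [if_neg (fun h => hj h.2.symm), if_neg hj]
    rfl

omit hD in
lemma phiAlt_update_single (s : S n p) (i : Fin p) (k : Fin n) (hk : k ≠ sOrd s i) :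
    phiAlt s (Function.update (bvec s) i (Pi.single k 1)) = 0 := by
  by_cases hks : k ∈ s.1
  · -- repeated entry
    obtain ⟨i0, hi0⟩ : ∃ i0, sOrd s i0 = k :=
      ⟨(s.1.orderIsoOfFin s.2).symm ⟨k, hks⟩, by simp [sOrd]⟩
    have hi0i : i0 ≠ i := fun h => hk (h ▸ hi0).symm
    apply AlternatingMap.map_eq_zero_of_eq (phiAlt s) _ (i := i0) (j := i) _ hi0i
    rw [Function.update_of_ne hi0i, Function.update_self, bvec, hi0]
  · -- zero row
    rw [phiAlt_apply]
    apply Matrix.det_eq_zero_of_row_eq_zero i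
    intro j
    simp only [Matrix.of_apply, Function.update_self, Pi.single_apply]
    rw [if_neg]
    intro h
    exact hks (h ▸ sOrd_mem s j)

lemma Ffun_D_offdiag (k l : Fin n) (hkl : k ≠ l) (s : S n p) :
    Ffun s (D (Matrix.single k l 1 + Matrix.single l k 1) (bw s)) = 0 := by
  set C := Matrix.single k l (1:ℝ) + Matrix.single l k 1 with hC
  rw [bw, hD, map_sum]
  apply Finset.sum_eq_zero
  intro i _
  have hmv : C.mulVec (bvec s i)
      = (if sOrd s i = l then Pi.single k 1 else 0)
        + (if sOrd s i = k then Pi.single l 1 else 0) := by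
    rw [hC, Matrix.add_mulVec, bvec, mulVec_std, mulVec_std]
  rw [hmv, wedge_update_add, map_add]
  have hz : ∀ (a b : Fin n) (hab : a ≠ b),
      Ffun s (wedge p (Function.update (bvec s) i
        (if sOrd s i = b then Pi.single a 1 else 0))) = 0 := by
    intro a b hab
    split_ifs with h
    · rw [Ffun_wedge]
      exact phiAlt_update_single s i a (fun he => hab (he.trans h))
    · rw [Ffun_wedge]
      exact AlternatingMap.map_update_zero _ _ _
  rw [hz k l hkl, hz l k (Ne.symm hkl), add_zero]

end Dlin


lemma perm_exists_ne {m : Type*} [DecidableEq m] (σ : Equiv.Perm m) (hσ : σ ≠ 1) (i : m) :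
    ∃ j, j ≠ i ∧ σ j ≠ j := by
  have : ¬ ∀ a, σ a = a := fun h => hσ (Equiv.ext h)
  push_neg at this
  obtain ⟨a, ha⟩ := this
  by_cases hai : a = i
  · subst hai
    refine ⟨σ a, ha, ?_⟩
    intro h
    exact ha (σ.injective h)
  · exact ⟨a, hai, ha⟩

lemma hasDerivAt_det_diag {m : Type*} [Fintype m] [DecidableEq m] (d : m → ℝ)
    (M1 : Matrix m m ℝ) :
    HasDerivAt (fun t : ℝ => (Matrix.diagonal d + t • M1).det)
      (∑ i : m, M1 i i * ∏ j ∈ Finset.univ.erase i, d j) 0 := by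
  classical
  have hfun : (fun t : ℝ => (Matrix.diagonal d + t • M1).det)
      = fun t => ∑ σ : Equiv.Perm m, ((Equiv.Perm.sign σ : ℤ) : ℝ) *
          ∏ i : m, (Matrix.diagonal d (σ i) i + t * M1 (σ i) i) := by
    funext t
    rw [Matrix.det_apply]
    apply Finset.sum_congr rfl
    intro σ _
    rw [Units.smul_def, zsmul_eq_mul]
    simp only [Matrix.add_apply, Matrix.smul_apply, smul_eq_mul]
  rw [hfun]
  have hder : ∀ σ : Equiv.Perm m, HasDerivAt (fun t : ℝ => ((Equiv.Perm.sign σ : ℤ) : ℝ) *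
      ∏ i : m, (Matrix.diagonal d (σ i) i + t * M1 (σ i) i))
      (((Equiv.Perm.sign σ : ℤ) : ℝ) * ∑ i : m, (∏ j ∈ Finset.univ.erase i,
        (Matrix.diagonal d (σ j) j + 0 * M1 (σ j) j)) • M1 (σ i) i) 0 := by
    intro σ
    apply HasDerivAt.const_mul
    apply HasDerivAt.fun_finsetProd
    intro i _
    exact (hasDerivAt_mul_const (M1 (σ i) i)).const_add (Matrix.diagonal d (σ i) i)
  have := HasDerivAt.fun_sum (u := (Finset.univ : Finset (Equiv.Perm m)))
    (fun σ _ => hder σ)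
  refine this.congr_deriv (Eq.symm ?_)
  rw [Finset.sum_eq_single (1 : Equiv.Perm m)]
  · simp only [Equiv.Perm.sign_one, Units.val_one, Int.cast_one, one_mul, Equiv.Perm.one_apply,
      zero_mul, add_zero, Matrix.diagonal_apply_eq, smul_eq_mul]
    apply Finset.sum_congr rfl
    intro i _
    rw [mul_comm]
  · intro σ _ hσ
    have hz : ∀ i : m, (∏ j ∈ Finset.univ.erase i,
        (Matrix.diagonal d (σ j) j + 0 * M1 (σ j) j)) • M1 (σ i) i = 0 := by
      intro i
      obtain ⟨j, hji, hj⟩ := perm_exists_ne σ hσ i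
      have : Matrix.diagonal d (σ j) j + 0 * M1 (σ j) j = 0 := by
        rw [Matrix.diagonal_apply_ne _ hj, zero_mul, add_zero]
      rw [Finset.prod_eq_zero (Finset.mem_erase.mpr ⟨hji, Finset.mem_univ j⟩) this, zero_smul]
    rw [Finset.sum_congr rfl fun i _ => hz i, Finset.sum_const_zero, mul_zero]
  · intro h
    exact absurd (Finset.mem_univ 1) h

end MpAux

open MpAux

/-- first derivatives of `ℳ_p = det 𝒟_•` at a diagonal matrix
`A = diag(λ₁,…,λ_n)` (all `p`-fold eigenvalue sums nonzero): the partial derivative with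
respect to an off-diagonal entry `a_{kl}` (`k ≠ l`, taken in the space of symmetric
matrices) vanishes, and the partial derivative with respect to a diagonal entry `a_{ll}`
equals `ℳ_p(λ) Σ_{l ∈ {k₁,…,k_p}} 1/(λ_{k₁}+⋯+λ_{k_p})`. -/
theorem Mp_first_derivatives_at_diagonal (n p : ℕ) (hp : 1 ≤ p) (hpn : p ≤ n)
    (D : Matrix (Fin n) (Fin n) ℝ → (⋀[ℝ]^p (Fin n → ℝ) →ₗ[ℝ] ⋀[ℝ]^p (Fin n → ℝ)))
    (hD : ∀ (B : Matrix (Fin n) (Fin n) ℝ) (v : Fin p → (Fin n → ℝ)),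
      D B (wedge p v) = ∑ i : Fin p, wedge p (Function.update v i (B.mulVec (v i))))
    (lam : Fin n → ℝ)
    (hlam : ∀ s : Finset (Fin n), s.card = p → (∑ i ∈ s, lam i) ≠ 0) :
    (∀ k l : Fin n, k ≠ l →
      HasDerivAt (fun t : ℝ => LinearMap.det (D (Matrix.diagonal lam +
          t • (Matrix.single k l 1 + Matrix.single l k 1)))) 0 0) ∧
    (∀ l : Fin n,
      HasDerivAt (fun t : ℝ => LinearMap.det (D (Matrix.diagonal lam +
          t • Matrix.single l l 1)))
        ((∏ s ∈ Finset.powersetCard p (Finset.univ : Finset (Fin n)), ∑ i ∈ s, lam i) *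
          ∑ s ∈ (Finset.powersetCard p (Finset.univ : Finset (Fin n))).filter
              (fun s => l ∈ s), (∑ i ∈ s, lam i)⁻¹) 0) := by
  classical
  set d : S n p → ℝ := fun s => ∑ j ∈ s.1, lam j with hd
  have hdne : ∀ s : S n p, d s ≠ 0 := fun s => hlam s.1 s.2
  constructor
  · -- off-diagonal
    intro k l hkl
    set C := Matrix.single k l (1:ℝ) + Matrix.single l k 1 with hCdef
    set M1 := LinearMap.toMatrix (wBasis (n := n) (p := p)) wBasis (D C) with hM1
    have hfun : (fun t : ℝ => LinearMap.det (D (Matrix.diagonal lam + t • C)))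
        = fun t => (Matrix.diagonal d + t • M1).det := by
      funext t
      rw [← LinearMap.det_toMatrix (wBasis (n := n) (p := p))]
      congr 1
      rw [D_add D hD, D_smul D hD, LinearEquiv.map_add, LinearEquiv.map_smul,
        toMatrix_D_diagonal D hD]
    rw [hfun]
    have hz : (∑ s : S n p, M1 s s * ∏ j ∈ Finset.univ.erase s, d j) = 0 := by
      apply Finset.sum_eq_zero
      intro s _
      rw [hM1, toMatrix_entry, Ffun_D_offdiag D hD k l hkl s, zero_mul]
    exact hz ▸ hasDerivAt_det_diag d M1
  · -- diagonal
    intro l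
    set e : S n p → ℝ := fun s => if l ∈ s.1 then 1 else 0 with he
    have hfun : (fun t : ℝ => LinearMap.det (D (Matrix.diagonal lam +
          t • Matrix.single l l 1)))
        = fun t => ∏ s : S n p, (d s + t * e s) := by
      funext t
      have hmat : Matrix.diagonal lam + t • Matrix.single l l 1
          = Matrix.diagonal (fun j => lam j + t * (if j = l then 1 else 0)) := by
        ext i j
        by_cases h : i = j
        · subst h
          simp only [Matrix.add_apply, Matrix.smul_apply, Matrix.diagonal_apply_eq,
            Matrix.single, Matrix.of_apply, smul_eq_mul]
          by_cases h2 : i = l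
          · subst h2; simp
          · rw [if_neg (fun hc : l = i ∧ l = i => h2 hc.1.symm),
              if_neg (fun hc : i = l => h2 hc), mul_zero]
        · rw [Matrix.add_apply, Matrix.diagonal_apply_ne _ h, Matrix.diagonal_apply_ne _ h,
            Matrix.smul_apply]
          simp only [Matrix.single, Matrix.of_apply, smul_eq_mul]
          rw [if_neg (fun hc : l = i ∧ l = j => h (hc.1.symm.trans hc.2)), mul_zero, add_zero]
      rw [hmat, ← LinearMap.det_toMatrix (wBasis (n := n) (p := p)),
        toMatrix_D_diagonal D hD, Matrix.det_diagonal]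
      apply Finset.prod_congr rfl
      intro s _
      rw [Finset.sum_add_distrib, hd]
      congr 1
      rw [← Finset.mul_sum]
      congr 1
      exact Finset.sum_ite_eq' s.1 l (fun _ => 1)
    rw [hfun]
    have hder : HasDerivAt (fun t : ℝ => ∏ s : S n p, (d s + t * e s))
        (∑ s : S n p, (∏ j ∈ Finset.univ.erase s, (d j + 0 * e j)) • e s) 0 := by
      apply HasDerivAt.fun_finsetProd
      intro s _
      exact (hasDerivAt_mul_const (e s)).const_add (d s)
    have hval : (∑ s : S n p, (∏ j ∈ Finset.univ.erase s, (d j + 0 * e j)) • e s)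
        = (∏ s ∈ Finset.powersetCard p (Finset.univ : Finset (Fin n)), ∑ i ∈ s, lam i) *
          ∑ s ∈ (Finset.powersetCard p (Finset.univ : Finset (Fin n))).filter
              (fun s => l ∈ s), (∑ i ∈ s, lam i)⁻¹ := by
      have hprod : (∏ s ∈ Finset.powersetCard p (Finset.univ : Finset (Fin n)),
          ∑ i ∈ s, lam i) = ∏ s : S n p, d s := by
        rw [← Finset.prod_subtype (Finset.powersetCard p (Finset.univ : Finset (Fin n)))
          (fun s => Finset.mem_powersetCard_univ) (fun s => ∑ i ∈ s, lam i)]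
      have hsum : (∑ s ∈ (Finset.powersetCard p (Finset.univ : Finset (Fin n))).filter
              (fun s => l ∈ s), (∑ i ∈ s, lam i)⁻¹)
          = ∑ s : S n p, (if l ∈ s.1 then (d s)⁻¹ else 0) := by
        rw [Finset.sum_filter,
          ← Finset.sum_subtype (Finset.powersetCard p (Finset.univ : Finset (Fin n)))
          (fun s => Finset.mem_powersetCard_univ)
          (fun s => if l ∈ s then (∑ i ∈ s, lam i)⁻¹ else 0)]
      rw [hprod, hsum, Finset.mul_sum]
      apply Finset.sum_congr rfl
      intro s _
      have herase : (∏ j ∈ Finset.univ.erase s, (d j + 0 * e j))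
          = ∏ j ∈ Finset.univ.erase s, d j := by
        apply Finset.prod_congr rfl
        intro j _
        rw [zero_mul, add_zero]
      rw [herase, smul_eq_mul]
      simp only [he]
      by_cases hls : l ∈ s.1
      · rw [if_pos hls, if_pos hls, mul_one]
        have hmul := Finset.mul_prod_erase Finset.univ d (Finset.mem_univ s)
        rw [← hmul, mul_comm (d s), mul_assoc, mul_inv_cancel₀ (hdne s), mul_one]
      · rw [if_neg hls, if_neg hls, mul_zero, mul_zero]
    exact hval ▸ hder
end

section
/- Let λ ∈ 𝒫_p with coordinates ordered decreasingly λ_1 ≥ … ≥ λ_n, and let j satisfy j ≥ n−p+1. Then there is a constant θ = θ(n,p) > 0 (independent of λ) such that Σ_{j ∈ {k_1,…,k_p}} 1/(λ_{k_1}+⋯+λ_{k_p}) ≥ θ · Σ_{l=1}^n Σ_{l ∈ {k_1,…,k_p}} 1/(λ_{k_1}+⋯+λ_{k_p}). Equivalently ℳ_p^{jj}(λ) ≥ θ Σ_l ℳ_p^{ll}(λ). -/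
open Finset

/-- The `k`-th smallest element of a `p`-element subset of `Fin n` has value at most
`n - p + k`. -/
lemma orderEmbOfFin_val_le {n p : ℕ} (s : Finset (Fin n)) (hs : s.card = p) (k : Fin p) :
    (s.orderEmbOfFin hs k).val ≤ n - p + k.val := by
  set e := s.orderEmbOfFin hs with he
  have hpn : p ≤ n := by
    have := s.card_le_univ
    simpa [hs] using this
  have hsub : (Finset.Ioi k).image e ⊆ Finset.Ioi (e k) := by
    intro x hx
    simp only [Finset.mem_image, Finset.mem_Ioi] at hx ⊢
    obtain ⟨y, hy, rfl⟩ := hx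
    exact e.strictMono hy
  have hcard : ((Finset.Ioi k).image e).card = p - 1 - k.val := by
    rw [Finset.card_image_of_injective _ e.injective, Fin.card_Ioi]
  have h2 : p - 1 - k.val ≤ n - 1 - (e k).val := by
    rw [← hcard, ← Fin.card_Ioi (e k)]
    exact Finset.card_le_card hsub
  have h3 : (e k).val < n := (e k).2
  have h4 : k.val < p := k.2
  omega

/-- there is `θ = θ(n,p) > 0` such that for every decreasingly ordered
`λ ∈ 𝒫_p` and every index `j` with `j ≥ n - p + 1` (in 1-based numbering),
`Σ_{j ∈ {k₁,…,k_p}} 1/(λ_{k₁}+⋯+λ_{k_p}) ≥ θ · Σ_{l=1}^n Σ_{l ∈ {k₁,…,k_p}} 1/(λ_{k₁}+⋯+λ_{k_p})`,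
i.e. `ℳ_p^{jj}(λ) ≥ θ Σ_l ℳ_p^{ll}(λ)`. -/
theorem Mp_jj_dominates_trace (n p : ℕ) (hp : 1 ≤ p) (hpn : p ≤ n) :
    ∃ θ : ℝ, 0 < θ ∧
      ∀ lam : Fin n → ℝ, (∀ i j : Fin n, i ≤ j → lam j ≤ lam i) →
        (∀ s : Finset (Fin n), s.card = p → 0 < ∑ i ∈ s, lam i) →
        ∀ j : Fin n, n - p ≤ j.val →
          θ * ∑ l : Fin n,
              ∑ s ∈ (Finset.powersetCard p (Finset.univ : Finset (Fin n))).filter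
                  (fun s => l ∈ s), (∑ i ∈ s, lam i)⁻¹ ≤
            ∑ s ∈ (Finset.powersetCard p (Finset.univ : Finset (Fin n))).filter
                (fun s => j ∈ s), (∑ i ∈ s, lam i)⁻¹ := by
  have hn : 0 < n := lt_of_lt_of_le hp hpn
  have hchoose : 0 < n.choose p := Nat.choose_pos hpn
  refine ⟨((n : ℝ) * (n.choose p : ℝ))⁻¹, by
    apply inv_pos.2
    have h1 : (0:ℝ) < n := by exact_mod_cast hn
    have h2 : (0:ℝ) < n.choose p := by exact_mod_cast hchoose
    exact mul_pos h1 h2, ?_⟩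
  intro lam hmono hpos j hj
  -- the "extremal" set: the last `p` indices
  have hm : ∀ k : Fin p, n - p + k.val < n := fun k => by omega
  set m : Fin p → Fin n := fun k => ⟨n - p + k.val, hm k⟩ with hmdef
  have hminj : Function.Injective m := by
    intro a b hab
    have : n - p + a.val = n - p + b.val := congrArg Fin.val hab
    exact Fin.ext (by omega)
  set S0 : Finset (Fin n) := Finset.image m Finset.univ with hS0
  have hS0card : S0.card = p := by
    rw [hS0, Finset.card_image_of_injective _ hminj, Finset.card_univ, Fintype.card_fin]
  have hjS0 : j ∈ S0 := by
    refine Finset.mem_image.2 ⟨⟨j.val - (n - p), by omega⟩, Finset.mem_univ _, ?_⟩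
    exact Fin.ext (by show n - p + (j.val - (n - p)) = j.val; omega)
  -- sum over S0 is the smallest `p`-fold sum
  have hkey : ∀ s : Finset (Fin n), s.card = p → ∑ i ∈ S0, lam i ≤ ∑ i ∈ s, lam i := by
    intro s hs
    have h1 : ∑ i ∈ S0, lam i = ∑ k : Fin p, lam (m k) := by
      rw [hS0, Finset.sum_image (fun a _ b _ h => hminj h)]
    have h2 : ∑ i ∈ s, lam i = ∑ k : Fin p, lam (s.orderEmbOfFin hs k) := by
      have : s = Finset.image (s.orderEmbOfFin hs) Finset.univ := by
        apply Finset.eq_of_subset_of_card_le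
        · intro x hx
          have : x ∈ Set.range (s.orderEmbOfFin hs) := by
            rw [Finset.range_orderEmbOfFin]; exact hx
          obtain ⟨k, hk⟩ := this
          exact Finset.mem_image.2 ⟨k, Finset.mem_univ _, hk⟩
        · rw [Finset.card_image_of_injective _ (s.orderEmbOfFin hs).injective,
            Finset.card_univ, Fintype.card_fin, hs]
      conv_lhs => rw [this]
      rw [Finset.sum_image (fun a _ b _ h => (s.orderEmbOfFin hs).injective h)]
    rw [h1, h2]
    apply Finset.sum_le_sum
    intro k _
    apply hmono
    show (s.orderEmbOfFin hs k) ≤ m k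
    have := orderEmbOfFin_val_le s hs k
    exact Fin.le_iff_val_le_val.2 (by exact this)
  have hS0pos : 0 < ∑ i ∈ S0, lam i := hpos S0 hS0card
  set c : ℝ := (∑ i ∈ S0, lam i)⁻¹ with hc
  have hcpos : 0 < c := inv_pos.2 hS0pos
  -- each inverse term is at most `c`
  have hterm : ∀ s : Finset (Fin n), s.card = p → (∑ i ∈ s, lam i)⁻¹ ≤ c := by
    intro s hs
    exact inv_anti₀ hS0pos (hkey s hs)
  -- RHS is at least `c`
  have hRHS : c ≤ ∑ s ∈ (Finset.powersetCard p (Finset.univ : Finset (Fin n))).filter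
      (fun s => j ∈ s), (∑ i ∈ s, lam i)⁻¹ := by
    apply Finset.single_le_sum (f := fun s => (∑ i ∈ s, lam i)⁻¹)
    · intro s hs
      rw [Finset.mem_filter, Finset.mem_powersetCard] at hs
      exact le_of_lt (inv_pos.2 (hpos s hs.1.2))
    · rw [Finset.mem_filter, Finset.mem_powersetCard]
      exact ⟨⟨Finset.subset_univ _, hS0card⟩, hjS0⟩
  -- LHS bound
  have hLHS : ∑ l : Fin n, ∑ s ∈ (Finset.powersetCard p (Finset.univ : Finset (Fin n))).filter
      (fun s => l ∈ s), (∑ i ∈ s, lam i)⁻¹ ≤ (n : ℝ) * (n.choose p : ℝ) * c := by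
    calc ∑ l : Fin n, ∑ s ∈ (Finset.powersetCard p (Finset.univ : Finset (Fin n))).filter
          (fun s => l ∈ s), (∑ i ∈ s, lam i)⁻¹
        ≤ ∑ _l : Fin n, (n.choose p : ℝ) * c := by
          apply Finset.sum_le_sum
          intro l _
          calc ∑ s ∈ (Finset.powersetCard p (Finset.univ : Finset (Fin n))).filter
                (fun s => l ∈ s), (∑ i ∈ s, lam i)⁻¹
              ≤ ∑ _s ∈ (Finset.powersetCard p (Finset.univ : Finset (Fin n))).filter
                (fun s => l ∈ s), c := by
                apply Finset.sum_le_sum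
                intro s hs
                rw [Finset.mem_filter, Finset.mem_powersetCard] at hs
                exact hterm s hs.1.2
            _ = (((Finset.powersetCard p (Finset.univ : Finset (Fin n))).filter
                (fun s => l ∈ s)).card : ℝ) * c := by rw [Finset.sum_const, nsmul_eq_mul]
            _ ≤ (n.choose p : ℝ) * c := by
                apply mul_le_mul_of_nonneg_right _ (le_of_lt hcpos)
                have h1 : ((Finset.powersetCard p (Finset.univ : Finset (Fin n))).filter
                    (fun s => l ∈ s)).card ≤
                    (Finset.powersetCard p (Finset.univ : Finset (Fin n))).card :=
                  Finset.card_filter_le _ _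
                have h2 : (Finset.powersetCard p (Finset.univ : Finset (Fin n))).card
                    = n.choose p := by
                  rw [Finset.card_powersetCard, Finset.card_univ, Fintype.card_fin]
                exact_mod_cast h2 ▸ h1
      _ = (n : ℝ) * (n.choose p : ℝ) * c := by
          rw [Finset.sum_const, Finset.card_univ, Fintype.card_fin, nsmul_eq_mul]; ring
  have hnc : (0 : ℝ) < (n : ℝ) * (n.choose p : ℝ) := by
    have := Nat.choose_pos hpn
    positivity
  calc ((n : ℝ) * (n.choose p : ℝ))⁻¹ * ∑ l : Fin n,
        ∑ s ∈ (Finset.powersetCard p (Finset.univ : Finset (Fin n))).filter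
          (fun s => l ∈ s), (∑ i ∈ s, lam i)⁻¹
      ≤ ((n : ℝ) * (n.choose p : ℝ))⁻¹ * ((n : ℝ) * (n.choose p : ℝ) * c) :=
        mul_le_mul_of_nonneg_left hLHS (le_of_lt (inv_pos.2 hnc))
    _ = c := by field_simp
    _ ≤ _ := hRHS
end
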